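/- If T is a tree of order n ≥ 6 with 2·γnt(T) = n, then the diameter of T is at least 4 (equivalently, T is neither a star nor a double star). -/

import Mathlib

open SimpleGraph

variable {V : Type*}

/-- The open neighborhood `N(S)` of a set `S` of vertices: all vertices having a neighbor in `S`. -/
def openNbhd (G : SimpleGraph V) (S : Set V) : Set V := {v | ∃ u ∈ S, G.Adj u v}

/-- `S` is a dominating set: every vertex not in `S` has a neighbor in `S`. -/
def IsDomSet (G : SimpleGraph V) (S : Set V) : Prop := ∀ v ∉ S, ∃ u ∈ S, G.Adj u v

/-- `S` is a total dominating set: every vertex has a neighbor in `S`. -/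
def IsTotalDomSet (G : SimpleGraph V) (S : Set V) : Prop := ∀ v, ∃ u ∈ S, G.Adj u v

/-- `S` is a neighborhood total dominating set: a dominating set such that the subgraph
induced by the open neighborhood `N(S)` has no isolated vertex. -/
def IsNTDSet (G : SimpleGraph V) (S : Set V) : Prop :=
  IsDomSet G S ∧ ∀ v ∈ openNbhd G S, ∃ u ∈ openNbhd G S, G.Adj v u

/-- The domination number `γ(G)`. -/
noncomputable def domNum (G : SimpleGraph V) : ℕ :=
  sInf {n | ∃ S : Set V, IsDomSet G S ∧ S.ncard = n}

/-- The total domination number `γt(G)`. -/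
noncomputable def totalDomNum (G : SimpleGraph V) : ℕ :=
  sInf {n | ∃ S : Set V, IsTotalDomSet G S ∧ S.ncard = n}

/-- The neighborhood total domination number `γnt(G)`. -/
noncomputable def ntdNum (G : SimpleGraph V) : ℕ :=
  sInf {n | ∃ S : Set V, IsNTDSet G S ∧ S.ncard = n}

section Aux
variable {G : SimpleGraph V}

private lemma concat_isPath' {u v w : V} {p : G.Walk u v} (hp : p.IsPath) (h : G.Adj v w)
    (hw : w ∉ p.support) : (p.concat h).IsPath := by
  rw [← Walk.isPath_reverse_iff, Walk.reverse_concat]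
  exact hp.reverse.cons (by simpa using hw)

private lemma tree_path_length (hT : G.IsTree) [DecidableEq V] {u v : V} (p : G.Walk u v) (hp : p.IsPath) :
    p.length = G.dist u v := by
  obtain ⟨q, hq⟩ := hT.isConnected.exists_walk_length_eq_dist u v
  have heq : p = q.bypass := (hT.existsUnique_path u v).unique hp q.bypass_isPath
  exact le_antisymm (heq ▸ (hq ▸ q.length_bypass_le)) (dist_le p)

private lemma tree_dist_split (hT : G.IsTree) [DecidableEq V] {u v m : V} {p : G.Walk u v}
    (hp : p.IsPath) (hm : m ∈ p.support) :
    G.dist u v = G.dist u m + G.dist m v := by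
  rw [← tree_path_length hT p hp, ← tree_path_length hT _ (hp.takeUntil hm),
      ← tree_path_length hT _ (hp.dropUntil hm), ← Walk.length_append, Walk.take_spec]

private lemma tree_dist_extend (hT : G.IsTree) [DecidableEq V] {u v w : V} {p : G.Walk u v} (hp : p.IsPath)
    (h : G.Adj v w) (hw : w ∉ p.support) : G.dist u w = p.length + 1 := by
  rw [← Walk.length_concat p h, tree_path_length hT _ (concat_isPath' hp h hw)]
end Aux

section Main
variable {G : SimpleGraph V}

private lemma dom_edge [Fintype V] [DecidableEq V] (hT : G.IsTree)
    (hcard : 2 ≤ Fintype.card V) (hd : G.diam ≤ 3) :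
    ∃ a b, G.Adj a b ∧ ∀ w, w = a ∨ w = b ∨ G.Adj a w ∨ G.Adj b w := by
  have hconn := hT.isConnected
  have hne : Nonempty V := hconn.nonempty
  have hnt : G.ediam ≠ ⊤ := by
    obtain ⟨x, y, hxy⟩ := exists_edist_eq_ediam_of_finite (G := G)
    rw [← hxy]
    exact edist_ne_top_iff_reachable.mpr (hconn.preconnected x y)
  have hle : ∀ x y : V, G.dist x y ≤ G.diam := fun x y => dist_le_diam hnt
  have hdist2 : ∀ x y : V, x ≠ y → ¬ G.Adj x y → 2 ≤ G.dist x y := by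
    intro x y hne' hadj
    have h0 := hconn.pos_dist_of_ne hne'
    have h1 : G.dist x y ≠ 1 := fun h => hadj (dist_eq_one_iff_adj.mp h)
    omega
  -- a path between any two vertices, with length = dist
  have hpath : ∀ x y : V, ∃ p : G.Walk x y, p.IsPath ∧ p.length = G.dist x y := by
    intro x y
    obtain ⟨p0⟩ := hconn.preconnected x y
    exact ⟨p0.bypass, p0.bypass_isPath, tree_path_length hT _ p0.bypass_isPath⟩
  have hd1 : 1 ≤ G.diam := by
    obtain ⟨x, y, hxy⟩ := Fintype.exists_pair_of_one_lt_card (α := V) (by omega)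
    exact le_trans (hconn.pos_dist_of_ne hxy) (hle x y)
  obtain ⟨u, v, huv⟩ := exists_dist_eq_diam (G := G)
  have hcase : G.diam = 1 ∨ G.diam = 2 ∨ G.diam = 3 := by omega
  rcases hcase with h1 | h2 | h3
  · -- diameter 1
    have hadj : G.Adj u v := dist_eq_one_iff_adj.mp (by rw [huv, h1])
    refine ⟨u, v, hadj, fun w => ?_⟩
    by_cases hw : w = u
    · exact Or.inl hw
    right; right; left
    have := hle u w
    have := hconn.pos_dist_of_ne (Ne.symm hw)
    exact dist_eq_one_iff_adj.mp (by omega)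
  · -- diameter 2
    obtain ⟨q, hq, hql⟩ := hpath u v
    rw [huv, h2] at hql
    have hum : G.Adj u (q.getVert 1) := by
      have := q.adj_getVert_succ (i := 0) (by omega)
      rwa [q.getVert_zero] at this
    have hmv : G.Adj (q.getVert 1) v := by
      have := q.adj_getVert_succ (i := 1) (by omega)
      rwa [show q.getVert 2 = v by rw [← hql]; exact q.getVert_length] at this
    set m := q.getVert 1 with hm
    refine ⟨u, m, hum, fun w => ?_⟩
    by_contra hcon
    push_neg at hcon
    obtain ⟨hwu, hwm, hauw, hamw⟩ := hcon
    obtain ⟨r, hr, hrl⟩ := hpath w u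
    have hwu2 : 2 ≤ G.dist w u := hdist2 w u hwu (fun h => hauw h.symm)
    by_cases hmem : m ∈ r.support
    · have hsplit := tree_dist_split hT hr hmem
      have hmu : G.dist m u = 1 := dist_eq_one_iff_adj.mpr hum.symm
      have hwm2 : 2 ≤ G.dist w m := hdist2 w m hwm (fun h => hamw h.symm)
      have := hle w u
      rw [h2] at this
      omega
    · have := tree_dist_extend hT hr hum hmem
      have h2' := hle w m
      rw [h2] at h2'
      omega
  · -- diameter 3
    obtain ⟨q, hq, hql⟩ := hpath u v
    rw [huv, h3] at hql
    have hua : G.Adj u (q.getVert 1) := by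
      have := q.adj_getVert_succ (i := 0) (by omega)
      rwa [q.getVert_zero] at this
    have hab : G.Adj (q.getVert 1) (q.getVert 2) := q.adj_getVert_succ (i := 1) (by omega)
    have hbv : G.Adj (q.getVert 2) v := by
      have := q.adj_getVert_succ (i := 2) (by omega)
      rwa [show q.getVert 3 = v by rw [← hql]; exact q.getVert_length] at this
    set a := q.getVert 1 with ha
    set b := q.getVert 2 with hb
    have hub : G.dist u b = 2 := by
      have hle' : G.dist u b ≤ 2 := dist_le (Walk.cons hua (Walk.cons hab Walk.nil))
      have htri := hconn.dist_triangle (u := u) (v := b) (w := v)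
      have hbv1 : G.dist b v = 1 := dist_eq_one_iff_adj.mpr hbv
      rw [huv, h3] at htri
      omega
    refine ⟨a, b, hab, fun w => ?_⟩
    by_contra hcon
    push_neg at hcon
    obtain ⟨hwa, hwb, haaw, habw⟩ := hcon
    have hwa2 : 2 ≤ G.dist w a := hdist2 w a hwa (fun h => haaw h.symm)
    have hwb2 : 2 ≤ G.dist w b := hdist2 w b hwb (fun h => habw h.symm)
    have hle3 : ∀ x y : V, G.dist x y ≤ 3 := fun x y => by have := hle x y; omega
    obtain ⟨r, hr, hrl⟩ := hpath w b
    by_cases hmem : a ∈ r.support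
    · -- dist w b = dist w a + 1, so dist w a = 2, dist w b = 3
      have hsplit := tree_dist_split hT hr hmem
      have hab1 : G.dist a b = 1 := dist_eq_one_iff_adj.mpr hab
      have hwa' : G.dist w a = 2 := by have := hle3 w b; omega
      obtain ⟨s, hs, hsl⟩ := hpath w a
      have hbs : b ∉ s.support := by
        intro hbs
        have := tree_dist_split hT hs hbs
        have hba1 : G.dist b a = 1 := dist_eq_one_iff_adj.mpr hab.symm
        omega
      have hs' : (s.concat hab).IsPath := concat_isPath' hs hab hbs
      have hvs : v ∉ (s.concat hab).support := by
        rw [Walk.support_concat]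
        intro hv
        rw [List.mem_append, List.mem_singleton] at hv
        rcases hv with hv | hv
        · have := tree_dist_split hT hs hv
          have hva : G.dist v a = 2 := by
            have hle'' : G.dist v a ≤ 2 := dist_le (Walk.cons hbv.symm (Walk.cons hab.symm Walk.nil))
            have htri := hconn.dist_triangle (u := u) (v := a) (w := v)
            have hua1 : G.dist u a = 1 := dist_eq_one_iff_adj.mpr hua
            rw [huv, h3] at htri
            have hcomm := dist_comm (G := G) (u := a) (v := v)
            omega
          have h0 : G.dist w v = 0 := by omega
          have hwv := (hconn.dist_eq_zero_iff (u := w) (v := v)).mp h0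
          exact habw (by rw [hwv]; exact hbv)
        · exact hbv.ne hv.symm
      have := tree_dist_extend hT hs' hbv hvs
      rw [Walk.length_concat] at this
      have := hle3 w v
      omega
    · -- dist w a = dist w b + 1 = 3, dist w b = 2
      have hwa' := tree_dist_extend hT hr hab.symm hmem
      have hr' : (r.concat hab.symm).IsPath := concat_isPath' hr hab.symm hmem
      have hus : u ∉ (r.concat hab.symm).support := by
        rw [Walk.support_concat]
        intro hu
        rw [List.mem_append, List.mem_singleton] at hu
        rcases hu with hu | hu
        · have := tree_dist_split hT hr hu
          have := hle3 w a
          have h0 : G.dist w u = 0 := by omega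
          have hwu := (hconn.dist_eq_zero_iff (u := w) (v := u)).mp h0
          exact haaw (by rw [hwu]; exact hua.symm)
        · exact hua.ne hu
      have := tree_dist_extend hT hr' hua.symm hus
      rw [Walk.length_concat] at this
      have := hle3 w u
      omega

end Main

private lemma ntd_le_two' {G : SimpleGraph V} {a b : V} (hab : G.Adj a b)
    (hdom : ∀ w, w = a ∨ w = b ∨ G.Adj a w ∨ G.Adj b w) : ntdNum G ≤ 2 := by
  apply Nat.sInf_le
  have haN : a ∈ openNbhd G {a, b} := ⟨b, Or.inr rfl, hab.symm⟩
  have hbN : b ∈ openNbhd G {a, b} := ⟨a, Or.inl rfl, hab⟩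
  refine ⟨{a, b}, ⟨?_, ?_⟩, Set.ncard_pair hab.ne⟩
  · intro v hv
    rcases hdom v with h | h | h | h
    · exact absurd (h ▸ Set.mem_insert a {b}) hv
    · exact absurd (h ▸ Set.mem_insert_of_mem a rfl) hv
    · exact ⟨a, Or.inl rfl, h⟩
    · exact ⟨b, Or.inr rfl, h⟩
  · intro v _
    rcases hdom v with h | h | h | h
    · exact ⟨b, hbN, h ▸ hab⟩
    · exact ⟨a, haN, h ▸ hab.symm⟩
    · exact ⟨a, haN, h.symm⟩
    · exact ⟨b, hbN, h.symm⟩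

theorem stmt14 [Fintype V] (G : SimpleGraph V) (hT : G.IsTree)
    (hn : 6 ≤ Fintype.card V) (h : 2 * ntdNum G = Fintype.card V) :
    4 ≤ G.diam := by
  classical
  by_contra hlt
  push_neg at hlt
  obtain ⟨a, b, hab, hdom⟩ := dom_edge hT (by omega) (by omega)
  have := ntd_le_two' hab hdom
  omega
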